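/- Let n ≥ 2 and let A and B be symmetric (n+1)×(n+1) complex matrices whose pencil has generic corank 1 (every member is singular, and corank(A+tB) = 1 for some, hence all but finitely many, t ∈ ℂ) and non-constant vertices. Let W be the linear span of the union of the kernels ker(A+tB) over all t with corank(A+tB) = 1, and set m = dim W − 1. Then there exist vectors c₀, c₁, …, c_m ∈ ℂ^{n+1}, linearly independent (hence a basis of W), such that for every t ∈ ℂ with corank(A+tB) = 1 the kernel of A+tB is spanned by v(t) = c₀ + c₁t + ⋯ + c_m t^m. (That is, the closure of the vertex locus is a rational normal curve of degree m in the projective subspace ℙ(W) ≅ ℙ^m, the case r = 1 of the statement that the vertex variety of the pencil is a variety of minimal degree m − r + 1 in its span.) -/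

import Mathlib

open Matrix Polynomial

namespace SegreAux

lemma pencil_coeff0 (a b : ℂ) (p : ℂ[X]) :
    ((C a + X * C b) * p).coeff 0 = a * p.coeff 0 := by
  simp [add_mul, mul_assoc, mul_coeff_zero]

lemma pencil_coeffS (a b : ℂ) (p : ℂ[X]) (k : ℕ) :
    ((C a + X * C b) * p).coeff (k + 1) = a * p.coeff (k + 1) + b * p.coeff k := by
  simp [add_mul, mul_assoc, coeff_X_mul]

lemma extract_cols {a b : ℕ} (M : Matrix (Fin a) (Fin b) ℂ) {r : ℕ} (h : M.rank = r) :
    ∃ f : Fin r → Fin b, Function.Injective f ∧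
      LinearIndependent ℂ (fun j => Mᵀ (f j)) := by
  classical
  have hspan : Module.finrank ℂ (Submodule.span ℂ (Set.range Mᵀ)) = r := by
    exact (Matrix.rank_eq_finrank_span_cols M).symm.trans h
  obtain ⟨s, hs_sub, hs_span, hs_li⟩ := exists_linearIndependent ℂ (Set.range Mᵀ)
  haveI : Finite s := hs_li.finite
  haveI : Fintype s := Fintype.ofFinite s
  have hcard : Fintype.card s = r := by
    rw [← Set.toFinset_card, ← finrank_span_set_eq_card hs_li, hs_span]; exact hspan
  let e : Fin r ≃ s := (Fintype.equivFinOfCardEq hcard).symm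
  have hmem : ∀ x : s, x.1 ∈ Set.range Mᵀ := fun x => hs_sub x.2
  choose g hg using hmem
  refine ⟨fun i => g (e i), ?_, ?_⟩
  · intro i i' hii
    simp only at hii
    have h2 : (e i).1 = (e i').1 := by
      rw [← hg (e i), ← hg (e i'), hii]
    exact e.injective (Subtype.coe_injective h2)
  · have h3 : (fun j => Mᵀ (g (e j))) = (fun j => (e j).1) := by
      funext j; exact hg (e j)
    rw [h3]
    exact hs_li.comp e e.injective

lemma rank_ge_of_unit_submatrix {n : ℕ} (N : Matrix (Fin (n + 1)) (Fin (n + 1)) ℂ)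
    (e f : Fin n → Fin (n + 1)) (hu : IsUnit (N.submatrix e f)) : n ≤ N.rank := by
  classical
  have hcols : LinearIndependent ℂ (fun j => (N.submatrix e f)ᵀ j) :=
    Matrix.linearIndependent_cols_iff_isUnit.mpr hu
  have hcomp : (LinearMap.funLeft ℂ ℂ e) ∘ (fun j => Nᵀ (f j))
      = (fun j => (N.submatrix e f)ᵀ j) := by
    funext j; funext i
    simp [LinearMap.funLeft_apply]
  have hu' : LinearIndependent ℂ (fun j => Nᵀ (f j)) := by
    apply LinearIndependent.of_comp (LinearMap.funLeft ℂ ℂ e)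
    rw [hcomp]; exact hcols
  have h1 : Module.finrank ℂ (Submodule.span ℂ (Set.range (fun j => Nᵀ (f j)))) = n := by
    rw [finrank_span_eq_card hu', Fintype.card_fin]
  have h2 : Submodule.span ℂ (Set.range (fun j => Nᵀ (f j)))
      ≤ Submodule.span ℂ (Set.range Nᵀ) := by
    apply Submodule.span_mono
    rintro x ⟨j, rfl⟩; exact ⟨f j, rfl⟩
  calc n = Module.finrank ℂ (Submodule.span ℂ (Set.range (fun j => Nᵀ (f j)))) := h1.symm
    _ ≤ Module.finrank ℂ (Submodule.span ℂ (Set.range Nᵀ)) := Submodule.finrank_mono h2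
    _ = N.rank := (Matrix.rank_eq_finrank_span_cols N).symm

lemma exists_unit_submatrix {n : ℕ} (M : Matrix (Fin (n + 1)) (Fin (n + 1)) ℂ)
    (h : M.rank = n) :
    ∃ e f : Fin n → Fin (n + 1), Function.Injective e ∧ Function.Injective f ∧
      IsUnit (M.submatrix e f) := by
  classical
  obtain ⟨f, hf_inj, hf_li⟩ := extract_cols M h
  set N : Matrix (Fin (n + 1)) (Fin n) ℂ := M.submatrix id f with hN
  have hNcols : (fun j => Nᵀ j) = (fun j => Mᵀ (f j)) := by
    funext j; funext i; simp [hN]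
  have hrankN : N.rank = n := by
    rw [Matrix.rank_eq_finrank_span_cols]
    have h4 : Set.range Nᵀ = Set.range (fun j => Mᵀ (f j)) := by
      rw [← hNcols]
    rw [show Set.range N.col = Set.range Nᵀ from rfl, h4, finrank_span_eq_card hf_li, Fintype.card_fin]
  have hrankNT : Nᵀ.rank = n := by rw [Matrix.rank_transpose]; exact hrankN
  obtain ⟨e, he_inj, he_li⟩ := extract_cols Nᵀ hrankNT
  refine ⟨e, f, he_inj, hf_inj, ?_⟩
  rw [← Matrix.linearIndependent_rows_iff_isUnit]
  have h5 : (fun i => (M.submatrix e f) i) = (fun j => Nᵀᵀ (e j)) := by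
    funext i; funext k; simp [hN]
  show LinearIndependent ℂ (fun i => (M.submatrix e f) i)
  rw [h5]; exact he_li

end SegreAux


open Matrix Polynomial SegreAux

theorem vertex_curve_is_rational_normal (n m : ℕ) (hn : 2 ≤ n)
    (A B : Matrix (Fin (n + 1)) (Fin (n + 1)) ℂ)
    (hA : A.IsSymm) (hB : B.IsSymm)
    (hge : ∀ t : ℂ, (A + t • B).rank + 1 ≤ n + 1)
    (hmin : ∃ t : ℂ, (A + t • B).rank + 1 = n + 1)
    (hnc : ∃ t₁ t₂ : ℂ, (A + t₁ • B).rank + 1 = n + 1 ∧ (A + t₂ • B).rank + 1 = n + 1 ∧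
      LinearMap.ker (A + t₁ • B).mulVecLin ≠ LinearMap.ker (A + t₂ • B).mulVecLin)
    (W : Submodule ℂ (Fin (n + 1) → ℂ))
    (hW : W = ⨆ t ∈ {t : ℂ | (A + t • B).rank + 1 = n + 1},
      LinearMap.ker (A + t • B).mulVecLin)
    (hm : m + 1 = Module.finrank ℂ W) :
    ∃ c : Fin (m + 1) → (Fin (n + 1) → ℂ), LinearIndependent ℂ c ∧
      ∀ t : ℂ, (A + t • B).rank + 1 = n + 1 →
        LinearMap.ker (A + t • B).mulVecLin =
          Submodule.span ℂ {∑ i : Fin (m + 1), t ^ (i : ℕ) • c i} := by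
  classical
  set S : Set ℂ := {t : ℂ | (A + t • B).rank + 1 = n + 1} with hSdef
  have hrank_le : ∀ t : ℂ, (A + t • B).rank ≤ n := fun t => by have := hge t; omega
  have hdet0 : ∀ t : ℂ, (A + t • B).det = 0 := by
    intro t
    by_contra hdet
    have hunit : IsUnit (A + t • B) :=
      (Matrix.isUnit_iff_isUnit_det _).mpr (isUnit_iff_ne_zero.mpr hdet)
    have h1 := Matrix.rank_of_isUnit _ hunit
    rw [Fintype.card_fin] at h1
    have := hrank_le t; omega
  -- the pencil as a polynomial matrix
  set P : Matrix (Fin (n + 1)) (Fin (n + 1)) ℂ[X] :=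
    Matrix.of (fun i j => C (A i j) + X * C (B i j)) with hPdef
  have hPapp : ∀ i j, P i j = C (A i j) + X * C (B i j) := by
    intro i j; rw [hPdef]; rfl
  have hPmap : ∀ t : ℂ, P.map (⇑(evalRingHom t)) = A + t • B := by
    intro t
    ext i j
    rw [Matrix.map_apply, hPapp]
    simp only [coe_evalRingHom, eval_add, eval_mul, eval_C, eval_X, Matrix.add_apply,
      Matrix.smul_apply, smul_eq_mul]
  have hPeval : ∀ (t : ℂ) (w : Fin (n + 1) → ℂ[X]) (i : Fin (n + 1)),
      Polynomial.eval t ((P.mulVec w) i) = ((A + t • B).mulVec (fun j => (w j).eval t)) i := by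
    intro t w i
    simp only [Matrix.mulVec, dotProduct, eval_finset_sum]
    refine Finset.sum_congr rfl fun j _ => ?_
    rw [hPapp]
    simp only [eval_add, eval_mul, eval_C, eval_X, Matrix.add_apply, Matrix.smul_apply,
      smul_eq_mul]
  have hcoeff0 : ∀ (w : Fin (n + 1) → ℂ[X]) (i : Fin (n + 1)),
      ((P.mulVec w) i).coeff 0 = (A.mulVec (fun j => (w j).coeff 0)) i := by
    intro w i
    simp only [Matrix.mulVec, dotProduct, finset_sum_coeff]
    exact Finset.sum_congr rfl fun j _ => pencil_coeff0 _ _ _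
  have hcoeffS : ∀ (w : Fin (n + 1) → ℂ[X]) (k : ℕ) (i : Fin (n + 1)),
      ((P.mulVec w) i).coeff (k + 1) =
        (A.mulVec (fun j => (w j).coeff (k + 1))) i + (B.mulVec (fun j => (w j).coeff k)) i := by
    intro w k i
    simp only [Matrix.mulVec, dotProduct, finset_sum_coeff]
    rw [← Finset.sum_add_distrib]
    exact Finset.sum_congr rfl fun j _ => pencil_coeffS _ _ _ _
  -- determinant is identically zero, hence a nonzero polynomial kernel vector exists
  have hdetP : P.det = 0 := by
    apply Polynomial.funext
    intro t
    have h1 : Polynomial.eval t P.det = (P.map (⇑(evalRingHom t))).det :=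
      RingHom.map_det (evalRingHom t) P
    rw [h1, hPmap t, hdet0 t]
    simp
  obtain ⟨v0, hv0_ne, hv0⟩ := Matrix.exists_mulVec_eq_zero_iff.mpr hdetP
  -- minimal degree of a nonzero polynomial kernel vector
  set Good : ℕ → Prop := fun dd => ∃ w : Fin (n + 1) → ℂ[X],
    w ≠ 0 ∧ P.mulVec w = 0 ∧ ∀ i, (w i).natDegree ≤ dd with hGooddef
  have hGood : ∃ dd, Good dd :=
    ⟨Finset.univ.sup (fun i => (v0 i).natDegree), v0, hv0_ne, hv0,
      fun i => Finset.le_sup (f := fun i => (v0 i).natDegree) (Finset.mem_univ i)⟩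
  set d : ℕ := Nat.find hGood with hddef
  obtain ⟨v, hv_ne, hv_ker, hv_deg⟩ := Nat.find_spec hGood
  have hmin_d : ∀ d' < d, ¬ Good d' := fun d' hd' => Nat.find_min hGood hd'
  -- coefficient vectors
  set c : ℕ → (Fin (n + 1) → ℂ) := fun k j => (v j).coeff k with hcdef
  have hc_supp : ∀ k, d < k → c k = 0 := by
    intro k hk
    funext j
    exact Polynomial.coeff_eq_zero_of_natDegree_lt (lt_of_le_of_lt (hv_deg j) hk)
  have hrec0 : A.mulVec (c 0) = 0 := by
    funext i
    have h1 := congrArg (fun p => p.coeff 0) (congrFun hv_ker i)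
    simp only [Pi.zero_apply, coeff_zero] at h1
    rw [hcoeff0 v i] at h1
    exact h1
  have hrecS : ∀ k, A.mulVec (c (k + 1)) + B.mulVec (c k) = 0 := by
    intro k
    funext i
    have h1 := congrArg (fun p => p.coeff (k + 1)) (congrFun hv_ker i)
    simp only [Pi.zero_apply, coeff_zero] at h1
    rw [hcoeffS v k i] at h1
    exact h1
  -- the top coefficient is nonzero
  have hcd : c d ≠ 0 := by
    intro h0
    rcases Nat.eq_zero_or_pos d with hd0 | hdpos
    · apply hv_ne
      funext j
      have h1 : (v j).natDegree ≤ 0 := hd0 ▸ hv_deg j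
      have h2 : (v j).coeff 0 = 0 := by
        have := congrFun h0 j
        rw [hd0] at this
        exact this
      have h3 := Polynomial.eq_C_of_natDegree_le_zero h1
      rw [h3, h2]; simp
    · apply hmin_d (d - 1) (by omega)
      refine ⟨v, hv_ne, hv_ker, fun i => ?_⟩
      have hle := hv_deg i
      by_contra hgt
      push_neg at hgt
      have hnd : (v i).natDegree = d := by omega
      have hvi_ne : v i ≠ 0 := by
        intro h
        rw [h] at hnd
        simp at hnd
        omega
      have h4 : (v i).coeff d ≠ 0 := by
        rw [← hnd]
        exact Polynomial.leadingCoeff_ne_zero.mpr hvi_ne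
      exact h4 (congrFun h0 i)
  -- Kronecker's independence argument
  have hind : ∀ α : Fin (d + 1) → ℂ, (∑ i, α i • c (i : ℕ) = 0) → ∀ i, α i = 0 := by
    intro α hα
    set q : ℕ → (Fin (n + 1) → ℂ) := fun jj => ∑ i : Fin (d + 1), α i • c ((i : ℕ) + jj)
      with hqdef
    have hq0 : q 0 = 0 := by
      rw [hqdef]; simpa using hα
    have hq_high : ∀ jj, d < jj → q jj = 0 := by
      intro jj hjj
      simp only [hqdef]
      apply Finset.sum_eq_zero
      intro i _
      rw [hc_supp ((i : ℕ) + jj) (by omega)]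
      simp
    have hexpand : ∀ (M : Matrix (Fin (n + 1)) (Fin (n + 1)) ℂ) (jj : ℕ),
        M.mulVec (q jj) = ∑ i : Fin (d + 1), α i • M.mulVec (c ((i : ℕ) + jj)) := by
      intro M jj
      simp only [hqdef]
      rw [← Matrix.mulVecLin_apply, map_sum]
      refine Finset.sum_congr rfl fun i _ => ?_
      rw [_root_.map_smul, Matrix.mulVecLin_apply]
    have hqrec : ∀ jj, A.mulVec (q (jj + 1)) + B.mulVec (q jj) = 0 := by
      intro jj
      rw [hexpand, hexpand, ← Finset.sum_add_distrib]
      apply Finset.sum_eq_zero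
      intro i _
      rw [← smul_add]
      have h1 : (i : ℕ) + (jj + 1) = ((i : ℕ) + jj) + 1 := by omega
      rw [h1, hrecS ((i : ℕ) + jj)]
      simp
    -- all the shifted sums vanish
    have hqzero : ∀ jj, q jj = 0 := by
      have hyzero : ∀ k, q (k + 1) = 0 := by
        rcases Nat.eq_zero_or_pos d with hd0 | hdpos
        · intro k
          apply hq_high
          omega
        · -- build a polynomial solution of degree < d
          set u : Fin (n + 1) → ℂ[X] :=
            fun jx => ∑ k ∈ Finset.range d, Polynomial.C (q (k + 1) jx) * X ^ k with hudef
          have hucoeff : ∀ jx k, (u jx).coeff k = q (k + 1) jx := by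
            intro jx k
            simp only [hudef]
            simp only [finset_sum_coeff, coeff_C_mul, coeff_X_pow]
            rw [Finset.sum_eq_single k]
            · simp
            · intro b _ hbk
              simp [Ne.symm hbk]
            · intro hk
              simp only [Finset.mem_range, not_lt] at hk
              have := hq_high (k + 1) (by omega)
              rw [this]
              simp
          have hu_ker : P.mulVec u = 0 := by
            funext ix
            apply Polynomial.ext
            intro k
            rcases k with _ | k
            · rw [hcoeff0 u ix]
              have h1 : (fun j => (u j).coeff 0) = q 1 := by
                funext jx; exact hucoeff jx 0
              rw [h1]
              have h2 := hqrec 0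
              rw [hq0] at h2
              simp only [Matrix.mulVec_zero, add_zero] at h2
              rw [h2]
              simp
            · rw [hcoeffS u k ix]
              have h1 : (fun j => (u j).coeff (k + 1)) = q (k + 2) := by
                funext jx; exact hucoeff jx (k + 1)
              have h2 : (fun j => (u j).coeff k) = q (k + 1) := by
                funext jx; exact hucoeff jx k
              rw [h1, h2]
              have h3 := congrFun (hqrec (k + 1)) ix
              simpa using h3
          have hu_deg : ∀ jx, (u jx).natDegree ≤ d - 1 := by
            intro jx
            simp only [hudef]
            apply Polynomial.natDegree_sum_le_of_forall_le
            intro k hk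
            simp only [Finset.mem_range] at hk
            calc (Polynomial.C (q (k + 1) jx) * X ^ k).natDegree
                ≤ (X ^ k : ℂ[X]).natDegree := natDegree_C_mul_le _ _
              _ = k := natDegree_X_pow k
              _ ≤ d - 1 := by omega
          have hu0 : u = 0 := by
            by_contra hu_ne
            exact hmin_d (d - 1) (by omega) ⟨u, hu_ne, hu_ker, hu_deg⟩
          intro k
          funext jx
          have := hucoeff jx k
          rw [hu0] at this
          simp only [Pi.zero_apply, coeff_zero] at this
          rw [← this]
          simp
      intro jj
      rcases jj with _ | k
      · exact hq0
      · exact hyzero k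
    -- descending induction on the index
    have key : ∀ k : ℕ, ∀ i : Fin (d + 1), (i : ℕ) = k → α i = 0 := by
      intro k
      induction k using Nat.strong_induction_on with
      | _ k IH =>
        intro i hik
        have hkd : k ≤ d := by have := i.isLt; omega
        have hq : q (d - k) = 0 := hqzero (d - k)
        have hexp : q (d - k) = α i • c d := by
          simp only [hqdef]
          rw [Finset.sum_eq_single i]
          · rw [show (i : ℕ) + (d - k) = d by omega]
          · intro b _ hbne
            rcases Nat.lt_or_ge (b : ℕ) k with hb | hb
            · rw [IH (b : ℕ) hb b rfl]
              simp
            · have hbk : (b : ℕ) ≠ k := fun h => hbne (Fin.ext (h.trans hik.symm))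
              have : d < (b : ℕ) + (d - k) := by omega
              rw [hc_supp _ this]
              simp
          · intro h
            exact absurd (Finset.mem_univ i) h
        rw [hexp] at hq
        rcases smul_eq_zero.mp hq with h | h
        · exact h
        · exact absurd h hcd
    intro i
    exact key (i : ℕ) i rfl
  have hLI : LinearIndependent ℂ (fun i : Fin (d + 1) => c (i : ℕ)) := by
    rw [Fintype.linearIndependent_iff]
    exact hind
  -- evaluation of the kernel curve
  set vt : ℂ → (Fin (n + 1) → ℂ) := fun t jx => (v jx).eval t with hvtdef
  have hvt_sum : ∀ t : ℂ, (∑ i : Fin (d + 1), t ^ (i : ℕ) • c (i : ℕ)) = vt t := by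
    intro t
    funext jx
    have h1 : (v jx).eval t = ∑ i ∈ Finset.range (d + 1), (v jx).coeff i * t ^ i :=
      Polynomial.eval_eq_sum_range' (Nat.lt_succ_of_le (hv_deg jx)) t
    rw [hvtdef]
    simp only [Finset.sum_apply, Pi.smul_apply, smul_eq_mul]
    rw [h1, ← Fin.sum_univ_eq_sum_range (fun i => (v jx).coeff i * t ^ i) (d + 1)]
    exact Finset.sum_congr rfl fun i _ => by rw [hcdef]; ring
  have hvt_ker : ∀ t : ℂ, (A + t • B).mulVec (vt t) = 0 := by
    intro t
    funext i
    have h1 := congrArg (Polynomial.eval t) (congrFun hv_ker i)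
    rw [hPeval t v i] at h1
    simpa using h1
  have hvt_ne : ∀ t : ℂ, vt t ≠ 0 := by
    intro t0 h0
    have hdvd : ∀ jx, (X - Polynomial.C t0) ∣ v jx := by
      intro jx
      rw [Polynomial.dvd_iff_isRoot]
      have := congrFun h0 jx
      simpa [hvtdef] using this
    choose w hw using hdvd
    have hXne : (X - Polynomial.C t0) ≠ (0 : ℂ[X]) := Polynomial.X_sub_C_ne_zero t0
    have hw_ker : P.mulVec w = 0 := by
      funext i
      have h1 := congrFun hv_ker i
      have hfac : (P.mulVec v) i = (X - Polynomial.C t0) * (P.mulVec w) i := by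
        simp only [Matrix.mulVec, dotProduct, Finset.mul_sum]
        refine Finset.sum_congr rfl fun j _ => ?_
        rw [hw j]; ring
      rw [hfac] at h1
      simp only [Pi.zero_apply] at h1
      have h2 := mul_eq_zero.mp h1
      simpa [hXne] using h2
    have hw_ne : w ≠ 0 := by
      intro hw0
      apply hv_ne
      funext jx
      rw [hw jx, congrFun hw0 jx]
      simp
    have hdeg : ∀ jx, w jx ≠ 0 → (v jx).natDegree = 1 + (w jx).natDegree := by
      intro jx hjx
      rw [hw jx, Polynomial.natDegree_mul hXne hjx, Polynomial.natDegree_X_sub_C]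
    rcases Nat.eq_zero_or_pos d with hd0 | hdpos
    · obtain ⟨jx, hjx⟩ : ∃ jx, w jx ≠ 0 := by
        by_contra h
        push_neg at h
        exact hw_ne (funext h)
      have h1 := hdeg jx hjx
      have h2 := hv_deg jx
      omega
    · apply hmin_d (d - 1) (by omega)
      refine ⟨w, hw_ne, hw_ker, fun jx => ?_⟩
      by_cases hjx : w jx = 0
      · simp [hjx]
      · have h1 := hdeg jx hjx
        have h2 := hv_deg jx
        omega
  -- kernel description on S
  have hker_eq : ∀ t ∈ S, LinearMap.ker (A + t • B).mulVecLin = Submodule.span ℂ {vt t} := by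
    intro t ht
    have hrank : (A + t • B).rank = n := by
      have : (A + t • B).rank + 1 = n + 1 := ht
      omega
    have hker_fr : Module.finrank ℂ (LinearMap.ker (A + t • B).mulVecLin) = 1 := by
      have hrn := LinearMap.finrank_range_add_finrank_ker ((A + t • B).mulVecLin)
      have hr : Module.finrank ℂ (LinearMap.range (A + t • B).mulVecLin) = n := hrank
      have hpi : Module.finrank ℂ (Fin (n + 1) → ℂ) = n + 1 := by simp
      rw [hr, hpi] at hrn
      omega
    have hmem : vt t ∈ LinearMap.ker (A + t • B).mulVecLin := by
      rw [LinearMap.mem_ker, Matrix.mulVecLin_apply]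
      exact hvt_ker t
    have hle : Submodule.span ℂ {vt t} ≤ LinearMap.ker (A + t • B).mulVecLin :=
      (Submodule.span_singleton_le_iff_mem _ _).mpr hmem
    refine (Submodule.eq_of_le_of_finrank_eq hle ?_).symm
    rw [finrank_span_singleton (hvt_ne t), hker_fr]
  -- S is infinite
  obtain ⟨t0, ht0⟩ := hmin
  have ht0r : (A + t0 • B).rank = n := by omega
  obtain ⟨e, f, he, hf, hunit⟩ := exists_unit_submatrix _ ht0r
  set g : ℂ[X] := (P.submatrix e f).det with hgdef
  have hg_eval : ∀ t : ℂ, Polynomial.eval t g = ((A + t • B).submatrix e f).det := by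
    intro t
    rw [hgdef]
    have h1 : Polynomial.eval t (P.submatrix e f).det
        = ((P.submatrix e f).map (⇑(evalRingHom t))).det :=
      RingHom.map_det (evalRingHom t) _
    rw [h1, ← Matrix.submatrix_map, hPmap t]
  have hg_ne : g ≠ 0 := by
    intro h
    have h1 := hg_eval t0
    rw [h] at h1
    simp only [eval_zero] at h1
    have h2 : ((A + t0 • B).submatrix e f).det ≠ 0 :=
      isUnit_iff_ne_zero.mp ((Matrix.isUnit_iff_isUnit_det _).mp hunit)
    exact h2 h1.symm
  have hS_inf : S.Infinite := by
    have hsub : {t : ℂ | t ∉ S} ⊆ {t : ℂ | g.IsRoot t} := by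
      intro t ht
      by_contra hroot
      apply ht
      have hdetne : ((A + t • B).submatrix e f).det ≠ 0 := by
        rw [← hg_eval]
        exact hroot
      have hu : IsUnit ((A + t • B).submatrix e f) :=
        (Matrix.isUnit_iff_isUnit_det _).mpr (isUnit_iff_ne_zero.mpr hdetne)
      have h1 := rank_ge_of_unit_submatrix _ e f hu
      have h2 := hrank_le t
      show (A + t • B).rank + 1 = n + 1
      omega
    have hfin : {t : ℂ | t ∉ S}.Finite :=
      (Polynomial.finite_setOf_isRoot hg_ne).subset hsub
    have h3 := hfin.infinite_compl
    have h4 : {t : ℂ | t ∉ S}ᶜ = S := by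
      ext t; simp
    rwa [h4] at h3
  -- W is the span of the coefficient vectors
  have hWspan : W = Submodule.span ℂ (Set.range (fun i : Fin (d + 1) => c (i : ℕ))) := by
    rw [hW]
    apply le_antisymm
    · refine iSup₂_le fun t ht => ?_
      rw [hker_eq t ht, Submodule.span_le, Set.singleton_subset_iff]
      rw [← hvt_sum t]
      exact Submodule.sum_mem _ fun i _ =>
        Submodule.smul_mem _ _ (Submodule.subset_span ⟨i, rfl⟩)
    · rw [Submodule.span_le]
      rintro x ⟨i, rfl⟩
      set Wb : Submodule ℂ (Fin (n + 1) → ℂ) :=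
        ⨆ t ∈ S, LinearMap.ker (A + t • B).mulVecLin with hWbdef
      have hvtW : ∀ t ∈ S, vt t ∈ Wb := by
        intro t ht
        have h1 : LinearMap.ker (A + t • B).mulVecLin ≤ Wb := by
          rw [hWbdef]
          exact le_iSup₂ (f := fun t _ => LinearMap.ker (A + t • B).mulVecLin) t ht
        apply h1
        rw [hker_eq t ht]
        exact Submodule.mem_span_singleton_self _
      have hq : Wb.mkQ (c (i : ℕ)) = 0 := by
        refine (Module.forall_dual_apply_eq_zero_iff ℂ _).mp ?_
        intro φ
        set p : ℂ[X] := ∑ k : Fin (d + 1), Polynomial.C (φ (Wb.mkQ (c (k : ℕ)))) * X ^ (k : ℕ)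
          with hpdef
        have hp_eval : ∀ t ∈ S, p.eval t = 0 := by
          intro t ht
          have h1 : Wb.mkQ (vt t) = 0 := by
            rw [Submodule.mkQ_apply]
            exact (Submodule.Quotient.mk_eq_zero Wb).mpr (hvtW t ht)
          have h2 : p.eval t = φ (Wb.mkQ (vt t)) := by
            rw [← hvt_sum t, hpdef, eval_finset_sum, map_sum, map_sum]
            refine Finset.sum_congr rfl fun k _ => ?_
            rw [_root_.map_smul, _root_.map_smul]
            simp only [eval_mul, eval_C, eval_pow, eval_X, smul_eq_mul]
            ring
          rw [h2, h1, map_zero]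
        have hp0 : p = 0 := by
          apply Polynomial.eq_zero_of_infinite_isRoot p
          exact hS_inf.mono (fun t ht => hp_eval t ht)
        have h3 := congrArg (fun q : ℂ[X] => q.coeff (i : ℕ)) hp0
        simp only [hpdef, finset_sum_coeff, coeff_C_mul, coeff_X_pow, coeff_zero,
          mul_ite, mul_one, mul_zero, Fin.val_inj, Finset.sum_ite_eq', Finset.sum_ite_eq,
          Finset.mem_univ, if_true] at h3
        exact h3
      have hmem : c (i : ℕ) ∈ Wb := by
        rw [← Submodule.Quotient.mk_eq_zero Wb]
        rw [Submodule.mkQ_apply] at hq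
        exact hq
      exact hmem
  -- conclusion
  have hfrW : Module.finrank ℂ W = d + 1 := by
    rw [hWspan, finrank_span_eq_card hLI, Fintype.card_fin]
  have hmd : m = d := by
    rw [hfrW] at hm
    omega
  subst hmd
  refine ⟨fun i : Fin (d + 1) => c (i : ℕ), hLI, ?_⟩
  intro t ht
  rw [hker_eq t ht, hvt_sum t]
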